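/- Let R > 0, let ε_rr : [0, R] → ℝ be continuously differentiable and ε_θθ : [0, R] → ℝ be continuous. Suppose ∫₀^R [ r ε_rr(r) U'(r) + ε_θθ(r) U(r) ] dr = 0 for every continuously differentiable U : [0, R] → ℝ with U(0) = 0. Then ε_rr(R) = 0 and ε_θθ(r) = d/dr [ r ε_rr(r) ] for all r ∈ (0, R). -/

import Mathlib

/-- Necessity of the null-complement conditions in the axisymmetric setting: if
`∫₀^R (r ε_rr U' + ε_θθ U) dr = 0` for every `C¹` function `U` on `[0, R]` with `U(0) = 0`,
then `ε_rr(R) = 0` and `ε_θθ = d/dr (r ε_rr) = ε_rr + r ε_rr'` on `(0, R)`. -/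
theorem axisymmetric_conditions_of_orthogonal (R : ℝ) (hR : 0 < R)
    (εrr εrr' εθθ : ℝ → ℝ)
    (hεd : ∀ r ∈ Set.Icc (0 : ℝ) R, HasDerivAt εrr (εrr' r) r)
    (hεc : ContinuousOn εrr' (Set.Icc 0 R))
    (hθc : ContinuousOn εθθ (Set.Icc 0 R))
    (horth : ∀ U U' : ℝ → ℝ, (∀ r ∈ Set.Icc (0 : ℝ) R, HasDerivAt U (U' r) r) →
      ContinuousOn U' (Set.Icc 0 R) → U 0 = 0 →
      ∫ r in (0 : ℝ)..R, (r * εrr r * U' r + εθθ r * U r) = 0) :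
    εrr R = 0 ∧ ∀ r ∈ Set.Ioo (0 : ℝ) R, εθθ r = εrr r + r * εrr' r := by
  have hRle : (0:ℝ) ≤ R := hR.le
  have huIcc : Set.uIcc (0:ℝ) R = Set.Icc 0 R := Set.uIcc_of_le hRle
  have hεrrC : ContinuousOn εrr (Set.Icc 0 R) :=
    fun r hr => (hεd r hr).continuousAt.continuousWithinAt
  set θt : ℝ → ℝ := Set.IccExtend hRle ((Set.Icc 0 R).restrict εθθ) with hθtdef
  have hθtC : Continuous θt := hθc.restrict.Icc_extend'
  have hθteq : ∀ r ∈ Set.Icc (0:ℝ) R, θt r = εθθ r := fun r hr => by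
    rw [hθtdef, Set.IccExtend_of_mem _ _ hr]; rfl
  set Φ : ℝ → ℝ := fun x => ∫ t in (0:ℝ)..x, θt t with hΦdef
  have hΦd : ∀ x, HasDerivAt Φ (θt x) x :=
    fun x => (hθtC.integral_hasStrictDerivAt 0 x).hasDerivAt
  have hΦC : Continuous Φ := continuous_iff_continuousAt.2 fun x => (hΦd x).continuousAt
  set K : ℝ → ℝ := fun r => r * εrr r - Φ r + Φ R with hKdef
  have hKC : ContinuousOn K (Set.Icc 0 R) :=
    ((continuousOn_id.mul hεrrC).sub hΦC.continuousOn).add continuousOn_const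
  set Kt : ℝ → ℝ := Set.IccExtend hRle ((Set.Icc 0 R).restrict K) with hKtdef
  have hKtC : Continuous Kt := hKC.restrict.Icc_extend'
  have hKteq : ∀ r ∈ Set.Icc (0:ℝ) R, Kt r = K r := fun r hr => by
    rw [hKtdef, Set.IccExtend_of_mem _ _ hr]; rfl
  set U : ℝ → ℝ := fun x => ∫ t in (0:ℝ)..x, Kt t with hUdef
  have hUd : ∀ x, HasDerivAt U (Kt x) x :=
    fun x => (hKtC.integral_hasStrictDerivAt 0 x).hasDerivAt
  have hUC : Continuous U := continuous_iff_continuousAt.2 fun x => (hUd x).continuousAt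
  have hU0 : U 0 = 0 := intervalIntegral.integral_same
  have H := horth U Kt (fun r _ => hUd r) hKtC.continuousOn hU0
  -- integrability facts
  have i1 : IntervalIntegrable (fun r => r * εrr r * Kt r) MeasureTheory.volume 0 R :=
    (((continuousOn_id.mul hεrrC).mul hKtC.continuousOn).mono huIcc.le).intervalIntegrable
  have i2 : IntervalIntegrable (fun r => εθθ r * U r) MeasureTheory.volume 0 R :=
    ((hθc.mul hUC.continuousOn).mono huIcc.le).intervalIntegrable
  have i3 : IntervalIntegrable (fun r => θt r * U r) MeasureTheory.volume 0 R :=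
    (hθtC.mul hUC).intervalIntegrable _ _
  have i4 : IntervalIntegrable (fun r => Φ r * Kt r) MeasureTheory.volume 0 R :=
    (hΦC.mul hKtC).intervalIntegrable _ _
  have i5 : IntervalIntegrable (fun r => Φ R * Kt r) MeasureTheory.volume 0 R :=
    (continuous_const.mul hKtC).intervalIntegrable _ _
  have i6 : IntervalIntegrable (fun r => Kt r * Kt r) MeasureTheory.volume 0 R :=
    (hKtC.mul hKtC).intervalIntegrable _ _
  -- split H
  have E1 : (∫ r in (0:ℝ)..R, r * εrr r * Kt r) + (∫ r in (0:ℝ)..R, εθθ r * U r) = 0 := by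
    rw [← intervalIntegral.integral_add i1 i2]; exact H
  have E2 : (∫ r in (0:ℝ)..R, εθθ r * U r) = ∫ r in (0:ℝ)..R, θt r * U r := by
    apply intervalIntegral.integral_congr
    intro r hr
    rw [huIcc] at hr
    simp only [hθteq r hr]
  -- integration by parts
  have E3 : (∫ r in (0:ℝ)..R, θt r * U r) + (∫ r in (0:ℝ)..R, Φ r * Kt r) = Φ R * U R := by
    have hd : ∀ x ∈ Set.uIcc (0:ℝ) R, HasDerivAt (fun r => Φ r * U r)
        (θt x * U x + Φ x * Kt x) x := fun x _ => (hΦd x).mul (hUd x)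
    have := intervalIntegral.integral_eq_sub_of_hasDerivAt hd (i3.add i4)
    rw [intervalIntegral.integral_add i3 i4] at this
    have hΦ0 : Φ 0 = 0 := intervalIntegral.integral_same
    rw [this, hΦ0, hU0]; ring
  have E4 : (∫ r in (0:ℝ)..R, Φ R * Kt r) = Φ R * U R := by
    rw [intervalIntegral.integral_const_mul]
  have E5 : (∫ r in (0:ℝ)..R, Kt r * Kt r)
      = (∫ r in (0:ℝ)..R, r * εrr r * Kt r) - (∫ r in (0:ℝ)..R, Φ r * Kt r)
        + (∫ r in (0:ℝ)..R, Φ R * Kt r) := by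
    rw [← intervalIntegral.integral_sub i1 i4, ← intervalIntegral.integral_add (i1.sub i4) i5]
    apply intervalIntegral.integral_congr
    intro r hr
    rw [huIcc] at hr
    show Kt r * Kt r = r * εrr r * Kt r - Φ r * Kt r + Φ R * Kt r
    rw [hKteq r hr, hKdef]; ring
  have hKsq : (∫ r in (0:ℝ)..R, Kt r * Kt r) = 0 := by
    rw [E5]; rw [E2] at E1; linarith
  -- Kt * Kt = 0 on Icc
  have hae : (fun r => Kt r * Kt r) =ᵐ[MeasureTheory.volume.restrict (Set.Ioc 0 R)] 0 := by
    rw [← intervalIntegral.integral_eq_zero_iff_of_le_of_nonneg_ae hRle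
      (Filter.Eventually.of_forall fun r => mul_self_nonneg (Kt r)) i6]
    exact hKsq
  have hae' : (fun r => Kt r * Kt r) =ᵐ[MeasureTheory.volume.restrict (Set.Icc 0 R)] 0 := by
    rwa [MeasureTheory.Measure.restrict_congr_set MeasureTheory.Ioc_ae_eq_Icc] at hae
  have hKzero : ∀ r ∈ Set.Icc (0:ℝ) R, K r = 0 := by
    have heq : Set.EqOn (fun r => Kt r * Kt r) 0 (Set.Icc 0 R) :=
      MeasureTheory.Measure.eqOn_of_ae_eq hae' (hKtC.mul hKtC).continuousOn
        continuousOn_const (by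
          rw [interior_Icc, closure_Ioo hR.ne])
    intro r hr
    have h0 : Kt r * Kt r = 0 := heq hr
    have : Kt r = 0 := by nlinarith [sq_nonneg (Kt r)]
    rw [← hKteq r hr]; exact this
  have hεR : εrr R = 0 := by
    have := hKzero R ⟨hRle, le_refl R⟩
    rw [hKdef] at this
    simp only at this
    have : R * εrr R = 0 := by linarith
    exact (mul_eq_zero.1 this).resolve_left hR.ne'
  refine ⟨hεR, fun r hr => ?_⟩
  -- on Ioo, r * εrr r = Φ r - Φ R, differentiate
  have hmem : Set.Ioo (0:ℝ) R ∈ nhds r := (isOpen_Ioo).mem_nhds hr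
  have hev : (fun x => x * εrr x) =ᶠ[nhds r] (fun x => Φ x - Φ R) := by
    filter_upwards [hmem] with x hx
    have := hKzero x (Set.Ioo_subset_Icc_self hx)
    rw [hKdef] at this; simp only at this; linarith
  have hd1 : HasDerivAt (fun x => x * εrr x) (εrr r + r * εrr' r) r := by
    have := (hasDerivAt_id r).mul (hεd r (Set.Ioo_subset_Icc_self hr))
    simpa [one_mul, add_comm, Pi.mul_def] using this
  have hd2 : HasDerivAt (fun x => Φ x - Φ R) (θt r) r := (hΦd r).sub_const _
  have hd1' : HasDerivAt (fun x => Φ x - Φ R) (εrr r + r * εrr' r) r :=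
    hd1.congr_of_eventuallyEq hev.symm
  have := hd1'.unique hd2
  rw [hθteq r (Set.Ioo_subset_Icc_self hr)] at this
  exact this.symm
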